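/- Let E and E₁ be finite-dimensional real inner product spaces, A : E → E₁ a linear map with adjoint A*, f ∈ E₁, λ > 0, and J̃ : E → ℝ a ν-strongly convex function for some ν > 0. Let v̄ be the unique minimizer of J̃ on the affine space {v ∈ E : Av = f}, and let q̄ ∈ E₁ be such that A*q̄ is a subgradient of J̃ at v̄. Let q_0 ∈ E₁ be arbitrary and suppose, for every k ≥ 1, v_k minimizes the function v ↦ J̃(v) − ⟨q_{k-1}, Av⟩ + λ‖Av − f‖² over E, and q_k = q_{k-1} + 2λ(f − A v_k). Then for all k ≥ 1 one has ‖v_k − v̄‖² ≤ (1/ν)‖q_0 − q̄‖·‖A v_k − f‖. -/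

import Mathlib

open RealInnerProductSpace

/-- Limit helper: if `0 ≤ C + t * D` for all small positive `t` and `D ≥ 0`, then `0 ≤ C`. -/
lemma statement2_lim_aux (C D : ℝ) (hD : 0 ≤ D)
    (h : ∀ t : ℝ, 0 < t → t ≤ 1 → 0 ≤ C + t * D) : 0 ≤ C := by
  by_contra hC
  push_neg at hC
  have hDpos : 0 < D + 1 := by linarith
  have hCpos : 0 < -C := by linarith
  set t := min 1 (-C / (2 * (D + 1))) with ht
  have htpos : 0 < t := lt_min one_pos (div_pos hCpos (by linarith))
  have ht1 : t ≤ 1 := min_le_left _ _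
  have h2 : t ≤ -C / (2 * (D + 1)) := min_le_right _ _
  have h3 := h t htpos ht1
  have h4 : t * D ≤ (-C / (2 * (D + 1))) * D := mul_le_mul_of_nonneg_right h2 hD
  have h5 : (-C / (2 * (D + 1))) * D ≤ -C / 2 := by
    rw [div_mul_eq_mul_div, div_le_div_iff₀ (by linarith) two_pos]
    nlinarith
  linarith

/-- Quantitative convergence estimate for the augmented Lagrangian iteration
applied to a `ν`-strongly convex function `J`: `‖v_k − v̄‖² ≤ (1/ν)‖q_0 − q̄‖·‖A v_k − f‖`. -/
theorem statement2 {E E₁ : Type*}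
    [NormedAddCommGroup E] [InnerProductSpace ℝ E] [FiniteDimensional ℝ E]
    [NormedAddCommGroup E₁] [InnerProductSpace ℝ E₁] [FiniteDimensional ℝ E₁]
    (A : E →ₗ[ℝ] E₁) (f : E₁) (lam : ℝ) (hlam : 0 < lam)
    (ν : ℝ) (hν : 0 < ν) (J : E → ℝ)
    (hsc : ConvexOn ℝ Set.univ (fun v => J v - ν / 2 * ‖v‖ ^ 2))
    (vbar : E) (hvbarf : A vbar = f) (hvbarmin : ∀ v, A v = f → J vbar ≤ J v)
    (qbar : E₁)
    (hqbar : ∀ w, J vbar + ⟪(LinearMap.adjoint A) qbar, w - vbar⟫ ≤ J w)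
    (v : ℕ → E) (q : ℕ → E₁)
    (hmin : ∀ k : ℕ, ∀ w,
      J (v (k + 1)) - ⟪q k, A (v (k + 1))⟫ + lam * ‖A (v (k + 1)) - f‖ ^ 2 ≤
        J w - ⟪q k, A w⟫ + lam * ‖A w - f‖ ^ 2)
    (hq : ∀ k : ℕ, q (k + 1) = q k + (2 * lam) • (f - A (v (k + 1)))) :
    ∀ k : ℕ, ‖v (k + 1) - vbar‖ ^ 2 ≤ 1 / ν * ‖q 0 - qbar‖ * ‖A (v (k + 1)) - f‖ := by
  -- Strong convexity along segments
  have hcombo : ∀ a b : E, ∀ t : ℝ, 0 ≤ t → t ≤ 1 →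
      J (a + t • (b - a)) ≤ (1 - t) * J a + t * J b - ν / 2 * (t * (1 - t)) * ‖b - a‖ ^ 2 := by
    intro a b t ht0 ht1
    have hg := hsc.2 (Set.mem_univ a) (Set.mem_univ b)
      (by linarith : (0:ℝ) ≤ 1 - t) ht0 (by ring)
    simp only [smul_eq_mul] at hg
    have hco : (1 - t) • a + t • b = a + t • (b - a) := by
      rw [sub_smul, one_smul, smul_sub]; abel
    rw [hco] at hg
    have hw : ‖a + t • (b - a)‖ ^ 2 = ‖a‖ ^ 2 + 2 * (t * ⟪a, b - a⟫) + t ^ 2 * ‖b - a‖ ^ 2 := by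
      rw [norm_add_sq_real, real_inner_smul_right, norm_smul, Real.norm_eq_abs, mul_pow, sq_abs]
    have hb : ‖b‖ ^ 2 = ‖a‖ ^ 2 + 2 * ⟪a, b - a⟫ + ‖b - a‖ ^ 2 := by
      have hb0 : b = a + (b - a) := by abel
      nth_rewrite 1 [hb0]
      rw [norm_add_sq_real]
    have keyeq : (1 - t) * (J a - ν / 2 * ‖a‖ ^ 2) + t * (J b - ν / 2 * ‖b‖ ^ 2)
        + ν / 2 * ‖a + t • (b - a)‖ ^ 2
        = (1 - t) * J a + t * J b - ν / 2 * (t * (1 - t)) * ‖b - a‖ ^ 2 := by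
      rw [hw, hb]; ring
    linarith
  -- Strengthened subgradient inequality at the iterates
  have hsub1 : ∀ k : ℕ, ∀ u : E,
      J (v (k + 1)) + ⟪q (k + 1), A u - A (v (k + 1))⟫ + ν / 2 * ‖u - v (k + 1)‖ ^ 2 ≤ J u := by
    intro k u
    set vK := v (k + 1) with hvK
    have hadq : ⟪q (k + 1), A u - A vK⟫
        = ⟪q k, A u - A vK⟫ + 2 * lam * ⟪f - A vK, A u - A vK⟫ := by
      rw [hq k, inner_add_left, real_inner_smul_left]
    have hflip : ⟪A vK - f, A u - A vK⟫ = -⟪f - A vK, A u - A vK⟫ := by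
      rw [← inner_neg_left, neg_sub]
    have h0 : 0 ≤ J u - J vK - ⟪q (k + 1), A u - A vK⟫ - ν / 2 * ‖u - vK‖ ^ 2 := by
      apply statement2_lim_aux _ (lam * ‖A u - A vK‖ ^ 2 + ν / 2 * ‖u - vK‖ ^ 2) (by positivity)
      intro t ht0 ht1
      set w := vK + t • (u - vK) with hw
      have hAw : A w = A vK + t • (A u - A vK) := by
        rw [hw, map_add, map_smul, map_sub]
      have h2 := hmin k w
      have h1 := hcombo vK u t ht0.le ht1
      rw [← hw] at h1
      have hinner : ⟪q k, A w⟫ = ⟪q k, A vK⟫ + t * ⟪q k, A u - A vK⟫ := by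
        rw [hAw, inner_add_right, real_inner_smul_right]
      have hnorm : ‖A w - f‖ ^ 2 = ‖A vK - f‖ ^ 2 + 2 * (t * ⟪A vK - f, A u - A vK⟫)
          + t ^ 2 * ‖A u - A vK‖ ^ 2 := by
        have hrw : A w - f = (A vK - f) + t • (A u - A vK) := by rw [hAw]; abel
        rw [hrw, norm_add_sq_real, real_inner_smul_right, norm_smul, Real.norm_eq_abs,
          mul_pow, sq_abs]
      rw [hinner, hnorm] at h2
      have hM : 0 ≤ J u - J vK - ⟪q k, A u - A vK⟫ - ν / 2 * (1 - t) * ‖u - vK‖ ^ 2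
          + 2 * lam * ⟪A vK - f, A u - A vK⟫ + lam * t * ‖A u - A vK‖ ^ 2 := by
        by_contra hcon
        push_neg at hcon
        nlinarith [h1, h2, ht0]
      rw [hadq]
      rw [hflip] at hM
      linarith
    linarith
  -- Strengthened subgradient inequality at the minimizer
  have hsub2 : ∀ u : E,
      J vbar + ⟪(LinearMap.adjoint A) qbar, u - vbar⟫ + ν / 2 * ‖u - vbar‖ ^ 2 ≤ J u := by
    intro u
    have h0 : 0 ≤ J u - J vbar - ⟪(LinearMap.adjoint A) qbar, u - vbar⟫
        - ν / 2 * ‖u - vbar‖ ^ 2 := by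
      apply statement2_lim_aux _ (ν / 2 * ‖u - vbar‖ ^ 2) (by positivity)
      intro t ht0 ht1
      have h1 := hcombo vbar u t ht0.le ht1
      have h2 := hqbar (vbar + t • (u - vbar))
      have h3 : ⟪(LinearMap.adjoint A) qbar, vbar + t • (u - vbar) - vbar⟫
          = t * ⟪(LinearMap.adjoint A) qbar, u - vbar⟫ := by
        rw [add_sub_cancel_left, real_inner_smul_right]
      rw [h3] at h2
      have hM : 0 ≤ J u - J vbar - ⟪(LinearMap.adjoint A) qbar, u - vbar⟫
          - ν / 2 * (1 - t) * ‖u - vbar‖ ^ 2 := by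
        by_contra hcon
        push_neg at hcon
        nlinarith [h1, h2, ht0]
      linarith
    linarith
  -- Key estimate
  have key : ∀ k : ℕ, ν * ‖v (k + 1) - vbar‖ ^ 2 ≤ ⟪q (k + 1) - qbar, A (v (k + 1)) - f⟫ := by
    intro k
    have h1 := hsub1 k vbar
    have h2 := hsub2 (v (k + 1))
    have hAv : A vbar - A (v (k + 1)) = -(A (v (k + 1)) - f) := by rw [hvbarf]; abel
    have hadj : ⟪(LinearMap.adjoint A) qbar, v (k + 1) - vbar⟫ = ⟪qbar, A (v (k + 1)) - f⟫ := by
      rw [LinearMap.adjoint_inner_left, map_sub, hvbarf]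
    have hnrev : ‖vbar - v (k + 1)‖ = ‖v (k + 1) - vbar‖ := norm_sub_rev _ _
    have hng : ⟪q (k + 1), A vbar - A (v (k + 1))⟫ = -⟪q (k + 1), A (v (k + 1)) - f⟫ := by
      rw [hAv, inner_neg_right]
    rw [inner_sub_left]
    rw [hng, hnrev] at h1
    rw [hadj] at h2
    linarith
  -- Monotonicity of ‖q k − qbar‖
  have hmono : ∀ k : ℕ, ‖q (k + 1) - qbar‖ ≤ ‖q k - qbar‖ := by
    intro k
    have hk := key k
    have hqk : q k - qbar = (q (k + 1) - qbar) + (2 * lam) • (A (v (k + 1)) - f) := by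
      rw [hq k]; module
    have hsq : ‖q k - qbar‖ ^ 2 = ‖q (k + 1) - qbar‖ ^ 2
        + 2 * ((2 * lam) * ⟪q (k + 1) - qbar, A (v (k + 1)) - f⟫)
        + (2 * lam) ^ 2 * ‖A (v (k + 1)) - f‖ ^ 2 := by
      rw [hqk, norm_add_sq_real, real_inner_smul_right, norm_smul, Real.norm_eq_abs,
        mul_pow, sq_abs]
    have hnn : (0:ℝ) ≤ ν * ‖v (k + 1) - vbar‖ ^ 2 := by positivity
    have hip : 0 ≤ ⟪q (k + 1) - qbar, A (v (k + 1)) - f⟫ := le_trans hnn hk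
    have hterm : 0 ≤ 2 * ((2 * lam) * ⟪q (k + 1) - qbar, A (v (k + 1)) - f⟫) := by
      have := mul_nonneg (by linarith : (0:ℝ) ≤ 2 * lam) hip
      linarith
    have hterm2 : (0:ℝ) ≤ (2 * lam) ^ 2 * ‖A (v (k + 1)) - f‖ ^ 2 := by positivity
    have hsqle : ‖q (k + 1) - qbar‖ ^ 2 ≤ ‖q k - qbar‖ ^ 2 := by linarith
    calc ‖q (k + 1) - qbar‖ = Real.sqrt (‖q (k + 1) - qbar‖ ^ 2) :=
          (Real.sqrt_sq (norm_nonneg _)).symm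
      _ ≤ Real.sqrt (‖q k - qbar‖ ^ 2) := Real.sqrt_le_sqrt hsqle
      _ = ‖q k - qbar‖ := Real.sqrt_sq (norm_nonneg _)
  have hmono0 : ∀ k : ℕ, ‖q k - qbar‖ ≤ ‖q 0 - qbar‖ := by
    intro k
    induction k with
    | zero => exact le_refl _
    | succ n ih => exact le_trans (hmono n) ih
  -- Conclusion
  intro k
  have hk := key k
  have hcs := real_inner_le_norm (q (k + 1) - qbar) (A (v (k + 1)) - f)
  have hb := hmono0 (k + 1)
  have h1 : ν * ‖v (k + 1) - vbar‖ ^ 2 ≤ ‖q 0 - qbar‖ * ‖A (v (k + 1)) - f‖ := by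
    calc ν * ‖v (k + 1) - vbar‖ ^ 2 ≤ ⟪q (k + 1) - qbar, A (v (k + 1)) - f⟫ := hk
      _ ≤ ‖q (k + 1) - qbar‖ * ‖A (v (k + 1)) - f‖ := hcs
      _ ≤ ‖q 0 - qbar‖ * ‖A (v (k + 1)) - f‖ :=
          mul_le_mul_of_nonneg_right hb (norm_nonneg _)
  rw [show 1 / ν * ‖q 0 - qbar‖ * ‖A (v (k + 1)) - f‖
      = (‖q 0 - qbar‖ * ‖A (v (k + 1)) - f‖) / ν from by ring, le_div_iff₀ hν]
  linarith
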